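/- For every t ∈ ℝ and every nonzero integral ideal 𝔫 = 𝔫₀𝔫₁² of 𝒪, the 𝒩⁺-transform of the arithmetic function 𝔪 ↦ N(𝔪)^t satisfies 𝒩⁺[N^t](𝔫) = N(𝔫)^t · ∏_{v ∈ S(𝔫₁)∖S₂(𝔫)} (1 + q_v^{−2(t+1)}) · ∏_{v ∈ S₂(𝔫)} (1 + (1 − q_v^{−1})^{−1} q_v^{−2(t+1)}). -/

import Mathlib

/- Statement 3 (formula `cN+f`): for `t ∈ ℝ` and a nonzero integral ideal `𝔫 = 𝔫₀𝔫₁²`,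
   `𝒩⁺[N^t](𝔫) = N(𝔫)^t ∏_{v∈S(𝔫₁)∖S₂(𝔫)} (1 + q_v^{−2(t+1)})
               ∏_{v∈S₂(𝔫)} (1 + (1−q_v^{−1})^{−1} q_v^{−2(t+1)})`. -/

open NumberField UniqueFactorizationMonoid
open scoped Classical

namespace Stmt3

variable (F : Type*) [Field F] [NumberField F]

/-- `S(𝔪)`: the set of prime ideals dividing `𝔪`. -/
noncomputable def S (𝔪 : Ideal (𝓞 F)) : Finset (Ideal (𝓞 F)) :=
  (normalizedFactors 𝔪).toFinset

/-- `ord_v(𝔪)`: the exponent of the prime `v` in `𝔪`. -/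
noncomputable def ordv (v 𝔪 : Ideal (𝓞 F)) : ℕ :=
  (normalizedFactors 𝔪).count v

/-- `S_k(𝔪) = {v ∈ S(𝔪) : ord_v(𝔪) = k}`. -/
noncomputable def Sk (k : ℕ) (𝔪 : Ideal (𝓞 F)) : Finset (Ideal (𝓞 F)) :=
  (S F 𝔪).filter fun v => ordv F v 𝔪 = k

/-- `q_v`: the cardinality of the residue field `𝒪/𝔭_v`, as a real number. -/
noncomputable def qv (v : Ideal (𝓞 F)) : ℝ := (Ideal.absNorm v : ℝ)

/-- `ω_v(𝔠) = 1` if `v ∈ S(𝔠)`, and `(q_v+1)/(q_v−1)` otherwise. -/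
noncomputable def omegav (v 𝔠 : Ideal (𝓞 F)) : ℝ :=
  if v ∈ S F 𝔠 then 1 else (qv F v + 1) / (qv F v - 1)

/-- The quotient ideal `𝔫𝔟⁻¹` when `𝔟 ∣ 𝔫` (junk value `0` otherwise). -/
noncomputable def idealDiv (𝔫 𝔟 : Ideal (𝓞 F)) : Ideal (𝓞 F) :=
  if h : ∃ 𝔠, 𝔫 = 𝔟 * 𝔠 then h.choose else 0

/-- `𝔫₁`: the unique ideal with `𝔫 = 𝔫₀𝔫₁²`, `𝔫₀` squarefree. -/
noncomputable def nOne (𝔫 : Ideal (𝓞 F)) : Ideal (𝓞 F) :=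
  ∏ v ∈ S F 𝔫, v ^ (ordv F v 𝔫 / 2)

/-- `𝔫₀`: the product of the primes occurring in `𝔫` with odd exponent. -/
noncomputable def nZero (𝔫 : Ideal (𝓞 F)) : Ideal (𝓞 F) :=
  ∏ v ∈ S F 𝔫, v ^ (ordv F v 𝔫 % 2)

/-- `ι(𝔪) = ∏_{v∈S(𝔪)} (1+q_v)·q_v^{ord_v(𝔪)−1}`. -/
noncomputable def iota (𝔪 : Ideal (𝓞 F)) : ℝ :=
  ∏ v ∈ S F 𝔪, (1 + qv F v) * qv F v ^ (ordv F v 𝔪 - 1)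

/-- The `𝒩⁺`-transform of a real-valued arithmetic function `B`:
`𝒩⁺[B](𝔫) = Σ_{I ⊆ S(𝔫₁)} (∏_{v∈I∩S₁(𝔫₁)} ω_v(𝔫₀))
            (ι(𝔫∏_{v∈I}𝔭_v⁻²)/ι(𝔫)) B(𝔫∏_{v∈I}𝔭_v⁻²)`. -/
noncomputable def NplusTrans (B : Ideal (𝓞 F) → ℝ) (𝔫 : Ideal (𝓞 F)) : ℝ :=
  ∑ I ∈ (S F (nOne F 𝔫)).powerset,
    (∏ v ∈ I ∩ Sk F 1 (nOne F 𝔫), omegav F v (nZero F 𝔫)) *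
      (iota F (idealDiv F 𝔫 (∏ v ∈ I, v ^ 2)) / iota F 𝔫) *
      B (idealDiv F 𝔫 (∏ v ∈ I, v ^ 2))

section Aux
variable {F}

lemma qv_gt_one {v : Ideal (𝓞 F)} (hv : Prime v) : 1 < qv F v := by
  have h0 : Ideal.absNorm v ≠ 0 := by rw [Ne, Ideal.absNorm_eq_zero_iff]; exact hv.ne_zero
  have h1 : Ideal.absNorm v ≠ 1 := by
    rw [Ne, Ideal.absNorm_eq_one_iff]
    intro h; exact hv.not_unit (by simp [Ideal.isUnit_iff, h])
  have : 2 ≤ Ideal.absNorm v := by omega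
  have h2 : (2:ℝ) ≤ (Ideal.absNorm v : ℝ) := by exact_mod_cast this
  simp only [qv]; linarith

lemma prime_of_mem_S {v 𝔪 : Ideal (𝓞 F)} (h : v ∈ S F 𝔪) : Prime v :=
  prime_of_normalized_factor v (Multiset.mem_toFinset.mp h)
lemma nf_prod_pow (s : Finset (Ideal (𝓞 F))) (hs : ∀ v ∈ s, Prime v) (k : Ideal (𝓞 F) → ℕ) :
    normalizedFactors (∏ v ∈ s, v ^ k v) = ∑ v ∈ s, k v • ({v} : Multiset (Ideal (𝓞 F))) := by
  induction s using Finset.induction_on with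
  | empty => rw [Finset.prod_empty, Finset.sum_empty, normalizedFactors_one]
  | @insert a s ha ih =>
    have hprime : ∀ v ∈ s, Prime v := fun v hv => hs v (Finset.mem_insert_of_mem hv)
    have hane : a ^ k a ≠ 0 := pow_ne_zero _ (hs a (Finset.mem_insert_self a s)).ne_zero
    have hprodne : (∏ v ∈ s, v ^ k v) ≠ 0 :=
      Finset.prod_ne_zero_iff.mpr fun v hv => pow_ne_zero _ (hprime v hv).ne_zero
    rw [Finset.prod_insert ha, Finset.sum_insert ha, normalizedFactors_mul hane hprodne,
      normalizedFactors_pow, ih hprime,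
      normalizedFactors_irreducible (hs a (Finset.mem_insert_self a s)).irreducible, normalize_eq]


lemma ordv_prod_pow (s : Finset (Ideal (𝓞 F))) (hs : ∀ v ∈ s, Prime v) (k : Ideal (𝓞 F) → ℕ)
    (u : Ideal (𝓞 F)) :
    ordv F u (∏ v ∈ s, v ^ k v) = if u ∈ s then k u else 0 := by
  rw [ordv, nf_prod_pow s hs k, Multiset.count_sum']
  simp only [Multiset.count_nsmul, Multiset.count_singleton]
  simp [mul_ite, Finset.sum_ite_eq]

lemma S_prod_pow (s : Finset (Ideal (𝓞 F))) (hs : ∀ v ∈ s, Prime v) (k : Ideal (𝓞 F) → ℕ) :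
    S F (∏ v ∈ s, v ^ k v) = s.filter fun v => k v ≠ 0 := by
  ext u
  rw [S, Multiset.mem_toFinset, ← Multiset.count_ne_zero]
  have := ordv_prod_pow s hs k u
  rw [ordv] at this
  rw [this, Finset.mem_filter]
  split <;> simp_all

lemma prod_pow_ordv {𝔪 : Ideal (𝓞 F)} (h : 𝔪 ≠ 0) :
    ∏ v ∈ S F 𝔪, v ^ ordv F v 𝔪 = 𝔪 := by
  have := (prod_normalizedFactors h)
  rw [associated_iff_eq] at this
  unfold S ordv
  rw [← Finset.prod_multiset_count]
  exact this

/-- the quotient ideal -/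
noncomputable def mI (𝔫 : Ideal (𝓞 F)) (I : Finset (Ideal (𝓞 F))) : Ideal (𝓞 F) :=
  ∏ v ∈ S F 𝔫, v ^ (ordv F v 𝔫 - if v ∈ I then 2 else 0)

section Main
variable {𝔫 : Ideal (𝓞 F)} (h𝔫 : 𝔫 ≠ 0) {I : Finset (Ideal (𝓞 F))}
  (hI : I ⊆ S F (nOne F 𝔫))

lemma ordv_ne_zero {v : Ideal (𝓞 F)} (hv : v ∈ S F 𝔫) : ordv F v 𝔫 ≠ 0 := by
  simpa [ordv, Multiset.count_eq_zero] using Multiset.mem_toFinset.mp hv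

lemma S_nOne : S F (nOne F 𝔫) = (S F 𝔫).filter fun v => ordv F v 𝔫 / 2 ≠ 0 :=
  S_prod_pow _ (fun v hv => prime_of_mem_S hv) _

lemma S_nZero : S F (nZero F 𝔫) = (S F 𝔫).filter fun v => ordv F v 𝔫 % 2 ≠ 0 :=
  S_prod_pow _ (fun v hv => prime_of_mem_S hv) _

include hI in
lemma sub_S {v : Ideal (𝓞 F)} (hv : v ∈ I) : v ∈ S F 𝔫 := by
  have h := hI hv
  rw [S_nOne, Finset.mem_filter] at h
  exact h.1

include hI in
lemma two_le_ordv {v : Ideal (𝓞 F)} (hv : v ∈ I) : 2 ≤ ordv F v 𝔫 := by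
  have h := hI hv
  rw [S_nOne, Finset.mem_filter] at h
  omega

include h𝔫 hI in
lemma split_eq : (∏ v ∈ I, v ^ 2) * mI 𝔫 I = 𝔫 := by
  have hIs : I ⊆ S F 𝔫 := fun v hv => sub_S hI hv
  have h1 : ∏ v ∈ I, v ^ 2 = ∏ v ∈ S F 𝔫, v ^ (if v ∈ I then 2 else 0) :=
    calc ∏ v ∈ I, v ^ 2 = ∏ v ∈ I, v ^ (if v ∈ I then 2 else 0) :=
          Finset.prod_congr rfl fun v hv => by simp [hv]
      _ = _ := Finset.prod_subset hIs fun v _ hvI => by simp [hvI]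
  rw [h1, mI, ← Finset.prod_mul_distrib]
  conv_rhs => rw [← prod_pow_ordv h𝔫]
  refine Finset.prod_congr rfl fun v hv => ?_
  rw [← pow_add]
  congr 1
  by_cases hvI : v ∈ I
  · have := two_le_ordv hI hvI
    simp only [hvI, if_true]
    omega
  · simp [hvI]

include h𝔫 hI in
lemma idealDiv_eq : idealDiv F 𝔫 (∏ v ∈ I, v ^ 2) = mI 𝔫 I := by
  have hex : ∃ 𝔠, 𝔫 = (∏ v ∈ I, v ^ 2) * 𝔠 := ⟨mI 𝔫 I, (split_eq h𝔫 hI).symm⟩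
  rw [idealDiv, dif_pos hex]
  have hspec := hex.choose_spec
  have hne : (∏ v ∈ I, v ^ 2) ≠ 0 :=
    Finset.prod_ne_zero_iff.mpr fun v hv =>
      pow_ne_zero _ (prime_of_mem_S (sub_S hI hv)).ne_zero
  exact mul_left_cancel₀ hne (hspec.symm.trans (split_eq h𝔫 hI).symm)


lemma ordv_mI (u : Ideal (𝓞 F)) :
    ordv F u (mI 𝔫 I) =
      if u ∈ S F 𝔫 then ordv F u 𝔫 - (if u ∈ I then 2 else 0) else 0 :=
  ordv_prod_pow _ (fun v hv => prime_of_mem_S hv) _ u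

lemma S_mI :
    S F (mI 𝔫 I) = (S F 𝔫).filter
      (fun v => ordv F v 𝔫 - (if v ∈ I then 2 else 0) ≠ 0) :=
  S_prod_pow _ (fun v hv => prime_of_mem_S hv) _

lemma iota_pos : 0 < iota F 𝔫 := by
  refine Finset.prod_pos fun v hv => ?_
  have hq := qv_gt_one (prime_of_mem_S hv)
  positivity

include h𝔫 hI in
lemma iota_key :
    iota F (mI 𝔫 I) *
      ∏ v ∈ I, (if ordv F v 𝔫 = 2 then (1 + qv F v) * qv F v else qv F v ^ 2) =
    iota F 𝔫 := by
  have hIs : I ⊆ S F 𝔫 := fun v hv => sub_S hI hv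
  have h1 : iota F (mI 𝔫 I) = ∏ v ∈ S F 𝔫,
      (if ordv F v 𝔫 - (if v ∈ I then 2 else 0) ≠ 0 then
        (1 + qv F v) * qv F v ^ (ordv F v 𝔫 - (if v ∈ I then 2 else 0) - 1) else 1) := by
    rw [iota, S_mI, Finset.prod_filter]
    exact Finset.prod_congr rfl fun v hv => by rw [ordv_mI]; split <;> simp_all
  have h2 : (∏ v ∈ I, (if ordv F v 𝔫 = 2 then (1 + qv F v) * qv F v else qv F v ^ 2))
      = ∏ v ∈ S F 𝔫, (if v ∈ I then
          (if ordv F v 𝔫 = 2 then (1 + qv F v) * qv F v else qv F v ^ 2) else 1) :=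
    calc _ = ∏ v ∈ I, (if v ∈ I then
          (if ordv F v 𝔫 = 2 then (1 + qv F v) * qv F v else qv F v ^ 2) else 1) :=
          Finset.prod_congr rfl fun v hv => by rw [if_pos hv]
      _ = _ := Finset.prod_subset hIs fun v _ hvI => by rw [if_neg hvI]
  rw [h1, h2, ← Finset.prod_mul_distrib, iota]
  refine Finset.prod_congr rfl fun v hv => ?_
  have he : ordv F v 𝔫 ≠ 0 := ordv_ne_zero hv
  by_cases hvI : v ∈ I
  · have h2le := two_le_ordv hI hvI
    by_cases he2 : ordv F v 𝔫 = 2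
    · simp only [hvI, if_true, he2]
      norm_num
    · have h3le : 3 ≤ ordv F v 𝔫 := by omega
      simp only [hvI, if_true, if_neg he2, if_pos (by omega : ordv F v 𝔫 - 2 ≠ 0)]
      rw [mul_assoc, ← pow_add]
      congr 2
      omega
  · simp only [hvI, if_neg, if_false]
    rw [if_pos (by omega : ordv F v 𝔫 - 0 ≠ 0)]
    norm_num

include h𝔫 hI in
lemma iota_ratio :
    iota F (mI 𝔫 I) / iota F 𝔫 =
      ∏ v ∈ I, (if ordv F v 𝔫 = 2 then (1 + qv F v) * qv F v else qv F v ^ 2)⁻¹ := by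
  have hgpos : (0:ℝ) < ∏ v ∈ I, (if ordv F v 𝔫 = 2 then (1 + qv F v) * qv F v else qv F v ^ 2) := by
    refine Finset.prod_pos fun v hv => ?_
    have hq := qv_gt_one (prime_of_mem_S (sub_S hI hv))
    split <;> positivity
  have hipos : (0:ℝ) < iota F 𝔫 := iota_pos
  have key := iota_key h𝔫 hI
  have hmpos : (0:ℝ) < iota F (mI 𝔫 I) := iota_pos
  rw [Finset.prod_inv_distrib, ← key, div_mul_cancel_left₀ hmpos.ne']

include h𝔫 hI in
lemma mI_ne_zero : mI 𝔫 I ≠ 0 :=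
  Finset.prod_ne_zero_iff.mpr fun v hv => pow_ne_zero _ (prime_of_mem_S hv).ne_zero

include h𝔫 hI in
lemma norm_ratio (t : ℝ) :
    ((Ideal.absNorm (mI 𝔫 I) : ℝ)) ^ t =
      (Ideal.absNorm 𝔫 : ℝ) ^ t * ∏ v ∈ I, qv F v ^ (-2 * t) := by
  have hqpos : ∀ v ∈ I, (0:ℝ) < qv F v := fun v hv =>
    lt_trans one_pos (qv_gt_one (prime_of_mem_S (sub_S hI hv)))
  have hmpos : (0:ℝ) < (Ideal.absNorm (mI 𝔫 I) : ℝ) := by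
    have := mI_ne_zero h𝔫 hI (𝔫 := 𝔫) (I := I)
    have h0 : Ideal.absNorm (mI 𝔫 I) ≠ 0 := by
      rw [Ne, Ideal.absNorm_eq_zero_iff]; exact mI_ne_zero h𝔫 hI
    positivity
  have hnorm : (Ideal.absNorm 𝔫 : ℝ) = (∏ v ∈ I, qv F v ^ 2) * (Ideal.absNorm (mI 𝔫 I) : ℝ) := by
    conv_lhs => rw [← split_eq h𝔫 hI]
    push_cast [map_mul, map_prod, map_pow]
    rfl
  rw [hnorm, Real.mul_rpow (Finset.prod_nonneg fun v hv => by positivity) hmpos.le,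
    ← Real.finset_prod_rpow _ _ (fun v hv => by positivity) t]
  rw [mul_comm, ← mul_assoc, ← Finset.prod_mul_distrib]
  have hone : ∏ v ∈ I, (qv F v ^ (-2*t) * (qv F v ^ 2) ^ t) = 1 := by
    refine Finset.prod_eq_one fun v hv => ?_
    have h := hqpos v hv
    rw [← Real.rpow_natCast (qv F v) 2, ← Real.rpow_mul h.le, ← Real.rpow_add h]
    norm_num
  rw [hone, one_mul]


lemma mem_Sk_one_nOne {v : Ideal (𝓞 F)} (hv : v ∈ S F 𝔫) :
    v ∈ Sk F 1 (nOne F 𝔫) ↔ ordv F v 𝔫 / 2 = 1 := by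
  rw [Sk, Finset.mem_filter, S_nOne, Finset.mem_filter,
    nOne, ordv_prod_pow _ (fun u hu => prime_of_mem_S hu), if_pos hv]
  constructor
  · rintro ⟨-, h⟩; exact h
  · intro h; exact ⟨⟨hv, by omega⟩, h⟩

include hI in
lemma omega_prod :
    ∏ v ∈ I ∩ Sk F 1 (nOne F 𝔫), omegav F v (nZero F 𝔫) =
      ∏ v ∈ I, (if ordv F v 𝔫 = 2 then (qv F v + 1) / (qv F v - 1) else 1) := by
  have h1 : ∏ v ∈ I ∩ Sk F 1 (nOne F 𝔫), omegav F v (nZero F 𝔫) =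
      ∏ v ∈ I ∩ Sk F 1 (nOne F 𝔫),
        (if ordv F v 𝔫 = 2 then (qv F v + 1) / (qv F v - 1) else 1) := by
    refine Finset.prod_congr rfl fun v hv => ?_
    obtain ⟨hvI, hvSk⟩ := Finset.mem_inter.mp hv
    have hvS : v ∈ S F 𝔫 := sub_S hI hvI
    have hdiv : ordv F v 𝔫 / 2 = 1 := (mem_Sk_one_nOne hvS).mp hvSk
    rw [omegav, S_nZero]
    by_cases he2 : ordv F v 𝔫 = 2
    · rw [if_neg (fun h => by simp [Finset.mem_filter, he2] at h), if_pos he2]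
    · have he3 : ordv F v 𝔫 = 3 := by omega
      rw [if_pos (Finset.mem_filter.mpr ⟨hvS, by simp [he3]⟩), if_neg he2]
  rw [h1]
  refine Finset.prod_subset Finset.inter_subset_left fun v hvI hvn => ?_
  have hvS : v ∈ S F 𝔫 := sub_S hI hvI
  have : v ∉ Sk F 1 (nOne F 𝔫) := fun h => hvn (Finset.mem_inter.mpr ⟨hvI, h⟩)
  rw [mem_Sk_one_nOne hvS] at this
  have h2 := two_le_ordv hI hvI
  rw [if_neg (by omega)]

end Main

lemma rpow_split {q : ℝ} (hq : 0 < q) (t : ℝ) :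
    q ^ (-2*(t+1)) = q ^ (-2*t) * (q^2)⁻¹ := by
  rw [show (-2*(t+1) : ℝ) = -2*t + (-2:ℝ) by ring, Real.rpow_add hq]
  congr 1
  rw [show (-2:ℝ) = -((2:ℕ):ℝ) by norm_num, Real.rpow_neg hq.le, Real.rpow_natCast]


/-- the per-prime factor -/
noncomputable def fterm (F : Type*) [Field F] [NumberField F]
    (t : ℝ) (𝔫 v : Ideal (𝓞 F)) : ℝ :=
  if ordv F v 𝔫 = 2 then (1 - (qv F v)⁻¹)⁻¹ * qv F v ^ (-2*(t+1))
  else qv F v ^ (-2*(t+1))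

section Main2
variable {𝔫 : Ideal (𝓞 F)} (h𝔫 : 𝔫 ≠ 0) {I : Finset (Ideal (𝓞 F))}
  (hI : I ⊆ S F (nOne F 𝔫))

include h𝔫 hI in
lemma summand_eq (t : ℝ) :
    (∏ v ∈ I ∩ Sk F 1 (nOne F 𝔫), omegav F v (nZero F 𝔫)) *
      (iota F (idealDiv F 𝔫 (∏ v ∈ I, v ^ 2)) / iota F 𝔫) *
      ((Ideal.absNorm (idealDiv F 𝔫 (∏ v ∈ I, v ^ 2)) : ℝ) ^ t) =
    (Ideal.absNorm 𝔫 : ℝ) ^ t * ∏ v ∈ I, fterm F t 𝔫 v := by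
  rw [idealDiv_eq h𝔫 hI, omega_prod hI, iota_ratio h𝔫 hI, norm_ratio h𝔫 hI]
  rw [show ∀ a b c d : ℝ, a * b * (c * d) = c * (a * b * d) from fun a b c d => by ring,
    ← Finset.prod_mul_distrib, ← Finset.prod_mul_distrib]
  congr 1
  refine Finset.prod_congr rfl fun v hv => ?_
  have hq := qv_gt_one (prime_of_mem_S (sub_S hI hv))
  have hqpos : (0:ℝ) < qv F v := lt_trans one_pos hq
  rw [fterm, rpow_split hqpos]
  by_cases he2 : ordv F v 𝔫 = 2
  · rw [if_pos he2, if_pos he2, if_pos he2]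
    have h1 : qv F v ≠ 0 := hqpos.ne'
    have h2 : qv F v - 1 ≠ 0 := by linarith
    have h3 : 1 + qv F v ≠ 0 := by linarith
    field_simp
    ring
  · rw [if_neg he2, if_neg he2, if_neg he2]
    ring

end Main2


end Aux

set_option maxHeartbeats 1000000 in
theorem statement3
    (hF : ∀ v : NumberField.InfinitePlace F, v.IsReal)
    (t : ℝ) (𝔫 : Ideal (𝓞 F)) (h𝔫 : 𝔫 ≠ 0) :
    NplusTrans F (fun 𝔪 => (Ideal.absNorm 𝔪 : ℝ) ^ t) 𝔫 =
      (Ideal.absNorm 𝔫 : ℝ) ^ t *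
        (∏ v ∈ S F (nOne F 𝔫) \ Sk F 2 𝔫, (1 + (qv F v) ^ (-2 * (t + 1)))) *
        (∏ v ∈ Sk F 2 𝔫, (1 + (1 - (qv F v)⁻¹)⁻¹ * (qv F v) ^ (-2 * (t + 1)))) := by
  rw [NplusTrans,
    Finset.sum_congr rfl fun I hI => summand_eq h𝔫 (Finset.mem_powerset.mp hI) t,
    ← Finset.mul_sum]
  have hsum : ∑ I ∈ (S F (nOne F 𝔫)).powerset, ∏ v ∈ I, fterm F t 𝔫 v =
      ∏ v ∈ S F (nOne F 𝔫), (fterm F t 𝔫 v + 1) := by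
    rw [Finset.prod_add]
    exact Finset.sum_congr rfl fun I hI => by simp
  rw [hsum]
  have hsub : Sk F 2 𝔫 ⊆ S F (nOne F 𝔫) := by
    intro v hv
    rw [Sk, Finset.mem_filter] at hv
    rw [S_nOne, Finset.mem_filter]
    exact ⟨hv.1, by omega⟩
  rw [← Finset.prod_sdiff hsub, mul_assoc]
  congr 1
  congr 1
  · exact Finset.prod_congr rfl fun v hv => by
      obtain ⟨hv1, hv2⟩ := Finset.mem_sdiff.mp hv
      rw [S_nOne, Finset.mem_filter] at hv1
      have hne : ordv F v 𝔫 ≠ 2 := fun h => hv2 (Finset.mem_filter.mpr ⟨hv1.1, h⟩)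
      rw [fterm, if_neg hne, add_comm]
  · exact Finset.prod_congr rfl fun v hv => by
      rw [Sk, Finset.mem_filter] at hv
      rw [fterm, if_pos hv.2, add_comm]


end Stmt3
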